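/- Suppose the realizability predicate additionally satisfies: (a_1, a_2) is realizable if and only if a_1 a_2 is even (the case d odd, d ≠ 1,3,7), together with the closure axioms (R2), (R3). Then an integer vector (a_1, …, a_n) is realizable if and only if at most one of the a_i is odd. -/

import Mathlib

/-- **Realizability for `d` odd, `d ≠ 1, 3, 7`: a vector is realizable iff at most one entry
is odd.**  Let `R` be an abstract realizability predicate on integer vectors closed under
precomposition with injections of indices, coordinatewise integer scaling, appending a `0`,
and the composition rule (if `(1, a₂, …, aₙ)` and `(b₁, …, bₙ)` are realizable then so is
`(b₁, b₂ + a₂, …, bₙ + aₙ)`), and satisfying the base characterization that `(a₁, a₂)` is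
realizable iff `a₁ a₂` is even.  Then `(a₁, …, aₙ)` is realizable iff at most one `aᵢ` is
odd. -/
theorem realizable_iff_at_most_one_odd
    (R : ∀ n : ℕ, (Fin n → ℤ) → Prop)
    (hinj : ∀ (n k : ℕ) (a : Fin n → ℤ) (σ : Fin k → Fin n),
      Function.Injective σ → R n a → R k (a ∘ σ))
    (hscale : ∀ (n : ℕ) (a : Fin n → ℤ) (lam : Fin n → ℤ),
      R n a → R n (fun i => lam i * a i))
    (hzero : ∀ (n : ℕ) (a : Fin n → ℤ), R n a → R (n + 1) (Fin.snoc a 0))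
    (hcomp : ∀ (n : ℕ) (a b : Fin (n + 1) → ℤ), a 0 = 1 →
      R (n + 1) a → R (n + 1) b →
      R (n + 1) (fun i => if i = 0 then b 0 else b i + a i))
    (hbase : ∀ a₁ a₂ : ℤ, R 2 ![a₁, a₂] ↔ Even (a₁ * a₂)) :
    ∀ (n : ℕ) (a : Fin n → ℤ),
      R n a ↔ ∀ i j : Fin n, Odd (a i) → Odd (a j) → i = j := by
  -- R 1 ![x] for all x
  have hR1 : ∀ x : ℤ, R 1 ![x] := by
    intro x
    have h2 : R 2 ![x, 0] := (hbase x 0).mpr (by simp)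
    have := hinj 2 1 ![x, 0] ![0] (fun a b _ => Subsingleton.elim a b) h2
    have heq : (![x, 0] ∘ ![0]) = ![x] := by
      funext i; fin_cases i <;> rfl
    rwa [heq] at this
  -- padding with zeros
  have hpad : ∀ (n m : ℕ), n ≤ m → ∀ a : Fin n → ℤ, R n a →
      R m (fun j : Fin m => if h : (j : ℕ) < n then a ⟨j, h⟩ else 0) := by
    intro n m hnm
    induction m, hnm using Nat.le_induction with
    | base =>
      intro a ha
      have heq : (fun j : Fin n => if h : (j : ℕ) < n then a ⟨j, h⟩ else 0) = a := by
        funext j; simp [j.isLt]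
      rwa [heq]
    | succ m hm ih =>
      intro a ha
      have h2 := hzero m _ (ih a ha)
      have heq : (Fin.snoc (fun j : Fin m => if h : (j : ℕ) < n then a ⟨j, h⟩ else 0) (0:ℤ))
          = fun j : Fin (m+1) => if h : (j : ℕ) < n then a ⟨j, h⟩ else 0 := by
        funext j
        refine Fin.lastCases ?_ ?_ j
        · simp [Nat.not_lt.mpr hm]
        · intro k; simp
      rwa [heq] at h2
  -- vectors (1, even, even, ..., even)
  have hB : ∀ (n : ℕ) (u : Fin (n+1) → ℤ), u 0 = 1 → (∀ i, i ≠ 0 → Even (u i)) →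
      R (n+1) u := by
    intro n
    induction n with
    | zero =>
      intro u h0 _
      have heq : ![(1:ℤ)] = u := by
        funext i; fin_cases i; simpa using h0.symm
      rw [← heq]; exact hR1 1
    | succ n ih =>
      intro u h0 he
      -- the truncation
      have hv : R (n+1) (u ∘ Fin.castSucc) := by
        refine ih _ (by simpa using h0) ?_
        intro i hi
        exact he _ (fun h => hi (Fin.ext ((congrArg Fin.val h).trans (by simp))))
      have ha' := hzero (n+1) _ hv
      -- the last-entry vector b' = (1, 0, ..., 0, u last)
      have hlastne : (Fin.last (n+1) : Fin (n+2)) ≠ 0 := by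
        simp [Fin.ext_iff]
      have hb2 : R 2 ![1, u (Fin.last (n+1))] := (hbase _ _).mpr (by
        simpa using he (Fin.last (n+1)) hlastne)
      have hpadb := hpad 2 (n+2) (by omega) _ hb2
      set w : Fin (n+2) → ℤ :=
        fun j => if h : (j : ℕ) < 2 then (![1, u (Fin.last (n+1))]) ⟨j, h⟩ else 0 with hw
      have hswap := hinj (n+2) (n+2) w (Equiv.swap 1 (Fin.last (n+1)))
        (Equiv.injective _) hpadb
      have hres := hcomp (n+1) (Fin.snoc (u ∘ Fin.castSucc) (0:ℤ))
        (w ∘ (Equiv.swap 1 (Fin.last (n+1)))) (by simpa [Fin.snoc] using h0) ha' hswap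
      have heq : (fun i : Fin (n+2) => if i = 0 then (w ∘ (Equiv.swap 1 (Fin.last (n+1)))) 0
          else (w ∘ (Equiv.swap 1 (Fin.last (n+1)))) i + (Fin.snoc (u ∘ Fin.castSucc) (0:ℤ) : Fin (n+2) → ℤ) i)
          = u := by
        funext i
        by_cases hi0 : i = 0
        · subst hi0
          have h0ne1 : (0 : Fin (n+2)) ≠ 1 := by simp [Fin.ext_iff]
          simp [Equiv.swap_apply_of_ne_of_ne h0ne1 (Ne.symm hlastne), hw, ← h0]
        · simp only [if_neg hi0, Function.comp_apply]
          rcases Fin.eq_castSucc_or_eq_last i with ⟨k, rfl⟩ | rfl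
          swap
          · -- i = last
            simp [Equiv.swap_apply_right, hw, Fin.snoc_last]
          · have hk0' : k ≠ 0 := by
              intro h; apply hi0; simp [h]
            have hkne_last : (k.castSucc : Fin (n+2)) ≠ Fin.last (n+1) :=
              Fin.castSucc_lt_last k |>.ne
            by_cases hk1 : (k.castSucc : Fin (n+2)) = 1
            · have hn1 : (Fin.last (n+1) : Fin (n+2)) ≠ 1 := by
                intro h; exact hkne_last (hk1.trans h.symm)
              have hnat : ¬ ((Fin.last (n+1)).val < 2) := by
                have h1 : (n : ℕ) + 1 ≠ 1 := by simpa [Fin.ext_iff] using hn1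
                simp only [Fin.val_last]; omega
              have hb'val : w ((Equiv.swap 1 (Fin.last (n+1))) k.castSucc) = 0 := by
                rw [hk1, Equiv.swap_apply_left, hw]
                exact dif_neg hnat
              rw [hb'val, Fin.snoc_castSucc, zero_add]; rfl
            · have hb'val : w ((Equiv.swap 1 (Fin.last (n+1))) k.castSucc) = 0 := by
                rw [Equiv.swap_apply_of_ne_of_ne hk1 hkne_last, hw]
                refine dif_neg ?_
                have h1 : ((k.castSucc : Fin (n+2)) : ℕ) ≠ 0 := by
                  exact fun h => hi0 (Fin.ext (h.trans (by simp)))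
                have h2 : ((k.castSucc : Fin (n+2)) : ℕ) ≠ 1 := by
                  exact fun h => hk1 (Fin.ext (h.trans (by simp)))
                simp only [Fin.coe_castSucc] at h1 h2 ⊢
                omega
              rw [hb'val, Fin.snoc_castSucc, zero_add]; rfl
      rwa [heq] at hres
  -- any vector with all entries except possibly the 0th even
  have hE : ∀ (n : ℕ) (t : Fin (n+1) → ℤ), (∀ i, i ≠ 0 → Even (t i)) → R (n+1) t := by
    intro n t ht
    have hu : R (n+1) (fun i => if i = 0 then 1 else t i) := by
      refine hB n _ (by simp) ?_
      intro i hi; simpa [hi] using ht i hi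
    have hz : R (n+1) (fun j : Fin (n+1) => if h : (j : ℕ) < 1 then (![t 0]) ⟨j, h⟩ else 0) :=
      hpad 1 (n+1) (by omega) _ (hR1 (t 0))
    have hres := hcomp n _ _ (by simp) hu hz
    have heq : (fun i : Fin (n+1) => if i = 0 then
        (fun j : Fin (n+1) => if h : (j : ℕ) < 1 then (![t 0]) ⟨j, h⟩ else 0) 0
        else (fun j : Fin (n+1) => if h : (j : ℕ) < 1 then (![t 0]) ⟨j, h⟩ else 0) i
          + (fun i : Fin (n+1) => if i = 0 then 1 else t i) i) = t := by
      funext i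
      by_cases hi : i = 0
      · simp [hi]
      · have : ¬ ((i : Fin (n+1)) : ℕ) < 1 := by
          exact fun h => hi (Fin.ext ((Nat.lt_one_iff.mp h).trans (by simp)))
        simp [hi, this]
    rwa [heq] at hres
  intro n a
  constructor
  · intro h i j hi hj
    by_contra hij
    have hinj2 : Function.Injective (![i, j] : Fin 2 → Fin n) := by
      intro x y hxy
      fin_cases x <;> fin_cases y <;> simp_all
    have h2 := hinj n 2 a ![i, j] hinj2 h
    have heq : (a ∘ ![i, j]) = ![a i, a j] := by
      funext k; fin_cases k <;> rfl
    rw [heq, hbase] at h2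
    exact (Int.not_odd_iff_even.mpr h2) (hi.mul hj)
  · intro h
    match n with
    | 0 =>
      have := hinj 1 0 ![0] Fin.elim0 (fun x => x.elim0) (hR1 0)
      have heq : (![(0:ℤ)] ∘ Fin.elim0) = a := by
        funext i; exact i.elim0
      rwa [heq] at this
    | n + 1 =>
      by_cases hodd : ∃ k, Odd (a k)
      · obtain ⟨k, hk⟩ := hodd
        have hperm : R (n+1) (a ∘ (Equiv.swap 0 k)) := by
          refine hE n _ ?_
          intro i hi
          rw [← Int.not_odd_iff_even]
          intro hoi
          have hik : (Equiv.swap 0 k) i = k := h _ k hoi hk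
          exact hi ((Equiv.swap 0 k).injective
            (hik.trans (Equiv.swap_apply_left 0 k).symm))
        have := hinj (n+1) (n+1) _ ((Equiv.swap 0 k).symm) (Equiv.injective _) hperm
        have heq : ((a ∘ (Equiv.swap 0 k)) ∘ (Equiv.swap 0 k).symm) = a := by
          funext i; simp
        rwa [heq] at this
      · push_neg at hodd
        refine hE n a ?_
        intro i _
        rw [← Int.not_odd_iff_even]; exact hodd i
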